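/- Let R = ⊕_{n∈ℕ} R_n be an ℕ-graded ring containing a field of characteristic p > 0. Then the kernel of the universal derivation d : R → Ω_{R/R_0} is contained in the p-th Veronese subring ⊕_{j∈ℕ} R_{jp}. -/

import Mathlib

open DirectSum

variable {R : Type} [CommRing R] (𝒜 : ℕ → AddSubgroup R) [GradedRing 𝒜]

/-- The Euler map `r ↦ ∑ n • rₙ`. -/
noncomputable def eulerHom : R →+ R :=
  (DirectSum.toAddMonoid (fun n => n • (𝒜 n).subtype)).comp
    (DirectSum.decomposeAddEquiv 𝒜).toAddMonoidHom

lemma eulerHom_of {n : ℕ} (a : 𝒜 n) : eulerHom 𝒜 (a : R) = n • (a : R) := by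
  simp [eulerHom, DirectSum.decomposeAddEquiv_apply, DirectSum.decompose_coe,
    DirectSum.toAddMonoid_of]

lemma eulerHom_mul (a b : R) :
    eulerHom 𝒜 (a * b) = a * eulerHom 𝒜 b + b * eulerHom 𝒜 a := by
  induction a using DirectSum.Decomposition.inductionOn 𝒜 with
  | zero => simp
  | add a a' ha ha' => rw [add_mul, map_add, map_add, ha, ha']; ring
  | homogeneous a =>
    rename_i m
    induction b using DirectSum.Decomposition.inductionOn 𝒜 with
    | zero => simp
    | add b b' hb hb' => rw [mul_add, map_add, map_add, hb, hb']; ring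
    | homogeneous b =>
      rename_i n
      have hmem : (a : R) * (b : R) ∈ 𝒜 (m + n) := SetLike.mul_mem_graded a.2 b.2
      have := eulerHom_of 𝒜 (⟨(a : R) * (b : R), hmem⟩ : 𝒜 (m + n))
      rw [eulerHom_of 𝒜 a, eulerHom_of 𝒜 b]
      simp only at this
      rw [this, add_smul]
      simp only [nsmul_eq_mul]
      push_cast
      ring

lemma eulerHom_one : eulerHom 𝒜 (1 : R) = 0 := by
  have := eulerHom_of 𝒜 (⟨(1 : R), SetLike.one_mem_graded 𝒜⟩ : 𝒜 0)
  simpa using this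

/-- The Euler derivation. -/
noncomputable def eulerDeriv : Derivation (SetLike.GradeZero.subring 𝒜) R R where
  toFun := eulerHom 𝒜
  map_add' := map_add _
  map_smul' := by
    intro c r
    have hc : (c : R) ∈ 𝒜 0 := c.2
    have h0 : eulerHom 𝒜 (c : R) = 0 := by
      have := eulerHom_of 𝒜 (⟨(c : R), hc⟩ : 𝒜 0); simpa using this
    have halg : (algebraMap (SetLike.GradeZero.subring 𝒜) R) c = (c : R) := rfl
    simp only [Algebra.smul_def, RingHom.id_apply, halg]
    rw [eulerHom_mul, h0, mul_zero, add_zero]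
  map_one_eq_zero' := eulerHom_one 𝒜
  leibniz' := by
    intro a b
    show eulerHom 𝒜 (a * b) = a • eulerHom 𝒜 b + b • eulerHom 𝒜 a
    rw [smul_eq_mul, smul_eq_mul, eulerHom_mul]

lemma decompose_eulerHom (r : R) (n : ℕ) :
    (DirectSum.decompose 𝒜 (eulerHom 𝒜 r) n : R) = n • (DirectSum.decompose 𝒜 r n : R) := by
  induction r using DirectSum.Decomposition.inductionOn 𝒜 with
  | zero => simp
  | add a a' ha ha' =>
    rw [map_add, DirectSum.decompose_add, DirectSum.decompose_add, DirectSum.add_apply,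
      DirectSum.add_apply, AddSubgroup.coe_add, AddSubgroup.coe_add, ha, ha', smul_add]
  | homogeneous a =>
    rename_i m
    rw [eulerHom_of]
    have : (m : ℕ) • (a : R) = ((m • a : 𝒜 m) : R) := rfl
    rw [this, DirectSum.decompose_coe, DirectSum.decompose_coe]
    by_cases h : m = n
    · subst h; rw [DirectSum.of_eq_same, DirectSum.of_eq_same]; rfl
    · rw [DirectSum.of_eq_of_ne _ _ _ (Ne.symm h), DirectSum.of_eq_of_ne _ _ _ (Ne.symm h)]; simp

/-- Proposition 3.8(ii): if `R` is an `ℕ`-graded ring containing a field of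
characteristic `p > 0`, the kernel of the universal derivation
`d : R → Ω_{R/R₀}` is contained in the `p`-th Veronese subring
`⊕_j R_{jp}`. -/
theorem stmt18 (R : Type) [CommRing R] (𝒜 : ℕ → AddSubgroup R) [GradedRing 𝒜]
    (p : ℕ) (hp : p.Prime) (k : Type) [Field k] [CharP k p] (i : k →+* R) (x : R)
    (hx : KaehlerDifferential.D (SetLike.GradeZero.subring 𝒜) R x = 0) :
    x ∈ ⨆ j : ℕ, 𝒜 (j * p) := by
  classical
  have hE : eulerHom 𝒜 x = 0 := by
    have := congrArg (Derivation.liftKaehlerDifferential (eulerDeriv 𝒜)) hx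
    rwa [Derivation.liftKaehlerDifferential_comp_D, map_zero] at this
  have hcomp : ∀ n : ℕ, ¬ p ∣ n → (DirectSum.decompose 𝒜 x n : R) = 0 := by
    intro n hn
    have h1 : (n : ℕ) • (DirectSum.decompose 𝒜 x n : R) = 0 := by
      rw [← decompose_eulerHom, hE, DirectSum.decompose_zero]; simp
    have hk : ((n : k)) ≠ 0 := by
      rw [Ne, CharP.cast_eq_zero_iff k p n]; exact hn
    have h2 : i ((n : k)) * (DirectSum.decompose 𝒜 x n : R) = 0 := by
      rw [map_natCast, ← nsmul_eq_mul]; exact h1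
    calc (DirectSum.decompose 𝒜 x n : R)
        = i ((n : k)⁻¹) * (i ((n : k)) * (DirectSum.decompose 𝒜 x n : R)) := by
          rw [← mul_assoc, ← map_mul, inv_mul_cancel₀ hk, map_one, one_mul]
      _ = 0 := by rw [h2, mul_zero]
  rw [← DirectSum.sum_support_decompose 𝒜 x]
  refine AddSubgroup.sum_mem _ fun n _ => ?_
  by_cases h : p ∣ n
  · obtain ⟨j, rfl⟩ := h
    exact AddSubgroup.mem_iSup_of_mem j (by rw [mul_comm]; exact (DirectSum.decompose 𝒜 x (p*j)).2)
  · rw [hcomp n h]; exact zero_mem _
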